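/- For any odd positive integer k and nonnegative integer s, the number of fixed-point free involutions commuting with a permutation consisting of 2s disjoint k-cycles (on a set of size 2sk) that permute these cycles among themselves is k^s (2s-1)!!; and for a permutation consisting of an odd number of disjoint k-cycles with k odd, no commuting fixed-point free involution exists. -/

import Mathlib

open Equiv Function Finset

set_option linter.unusedSectionVars false

section Basic
variable {X : Type*} [Fintype X] [DecidableEq X] (k : ℕ) (α : Equiv.Perm X)

/-- orbit of `x` under `α` as a finset, assuming period `k` -/
def orb (x : X) : Finset X := (Finset.range k).image fun i => (α ^ i) x

variable (hk : Odd k) (hα : ∀ x : X, Function.minimalPeriod (⇑α) x = k)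

include hk in
lemma hk0 : 0 < k := by rcases hk with ⟨t, rfl⟩; omega

include hα in
lemma pow_k_apply (x : X) : (α ^ k) x = x := by
  have := Function.iterate_minimalPeriod (f := ⇑α) (x := x)
  rwa [hα, Equiv.Perm.iterate_eq_pow] at this

include hα in
lemma pow_mul_k_apply (q : ℕ) (x : X) : ((α ^ k) ^ q) x = x := by
  induction q with
  | zero => simp
  | succ n ih => rw [pow_succ, Equiv.Perm.mul_apply, pow_k_apply k α hα, ih]

include hα in
lemma pow_mod_apply (i : ℕ) (x : X) : (α ^ i) x = (α ^ (i % k)) x := by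
  conv_lhs => rw [← Nat.div_add_mod i k, Nat.add_comm]
  rw [pow_add, pow_mul, Equiv.Perm.mul_apply, pow_mul_k_apply k α hα]

include hk hα in
lemma pow_apply_inj {i j : ℕ} (hi : i < k) (hj : j < k) (x : X)
    (h : (α ^ i) x = (α ^ j) x) : i = j := by
  wlog hij : i ≤ j generalizing i j
  · exact (this hj hi h.symm (le_of_not_ge hij)).symm
  by_contra hne
  have hlt : i < j := lt_of_le_of_ne hij hne
  have hx : (α ^ (j - i)) x = x := by
    have h2 : (α ^ (i + (j - i))) x = (α ^ i) x := by rw [Nat.add_sub_cancel' hij, ← h]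
    rw [pow_add, Equiv.Perm.mul_apply] at h2
    exact (α ^ i).injective h2
  have hper : Function.IsPeriodicPt (⇑α) (j - i) x := by
    rwa [Function.IsPeriodicPt, Function.IsFixedPt, Equiv.Perm.iterate_eq_pow]
  have := hper.minimalPeriod_le (Nat.sub_pos_of_lt hlt)
  rw [hα] at this
  omega

include hk hα in
lemma pow_apply_eq_iff (i j : ℕ) (x : X) :
    (α ^ i) x = (α ^ j) x ↔ i % k = j % k := by
  constructor
  · intro h
    rw [pow_mod_apply k α hα i, pow_mod_apply k α hα j] at h
    exact pow_apply_inj k α hk hα (Nat.mod_lt _ (hk0 k hk)) (Nat.mod_lt _ (hk0 k hk)) x h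
  · intro h
    rw [pow_mod_apply k α hα i, pow_mod_apply k α hα j, h]

lemma mem_orb {x z : X} : z ∈ orb k α x ↔ ∃ i, i < k ∧ (α ^ i) x = z := by
  simp only [orb, Finset.mem_image, Finset.mem_range]

include hk hα in
lemma mem_orb_of_pow {x : X} (i : ℕ) : (α ^ i) x ∈ orb k α x :=
  (mem_orb k α).mpr ⟨i % k, Nat.mod_lt _ (hk0 k hk), (pow_mod_apply k α hα i x).symm⟩

include hk hα in
lemma mem_orb_self (x : X) : x ∈ orb k α x := by
  have := mem_orb_of_pow k α hk hα (x := x) 0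
  simpa using this

include hk hα in
lemma orb_eq_of_mem {x z : X} (hz : z ∈ orb k α x) : orb k α z = orb k α x := by
  obtain ⟨i, hi, rfl⟩ := (mem_orb k α).mp hz
  apply Finset.Subset.antisymm
  · intro w hw
    obtain ⟨j, hj, rfl⟩ := (mem_orb k α).mp hw
    rw [← Equiv.Perm.mul_apply, ← pow_add]
    exact mem_orb_of_pow k α hk hα _
  · intro w hw
    obtain ⟨j, hj, rfl⟩ := (mem_orb k α).mp hw
    have hx : (α ^ j) x = (α ^ (j + (k - i))) ((α ^ i) x) := by
      rw [← Equiv.Perm.mul_apply, ← pow_add,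
        show j + (k - i) + i = j + k by omega, pow_add, Equiv.Perm.mul_apply,
        pow_k_apply k α hα]
    rw [hx]
    exact mem_orb_of_pow k α hk hα _

include hk hα in
lemma card_orb (x : X) : (orb k α x).card = k := by
  rw [orb, Finset.card_image_of_injOn, Finset.card_range]
  intro i hi j hj h
  exact pow_apply_inj k α hk hα (Finset.mem_range.mp hi) (Finset.mem_range.mp hj) x h

include hk hα in
lemma apply_mem_orb {x z : X} (hz : z ∈ orb k α x) : α z ∈ orb k α x := by
  obtain ⟨i, hi, rfl⟩ := (mem_orb k α).mp hz
  have : α ((α ^ i) x) = (α ^ (i + 1)) x := by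
    rw [pow_succ', Equiv.Perm.mul_apply]
  rw [this]; exact mem_orb_of_pow k α hk hα _

include hk hα in
lemma mem_orb_iff_apply (x z : X) : z ∈ orb k α x ↔ α z ∈ orb k α x := by
  refine ⟨apply_mem_orb k α hk hα, fun h => ?_⟩
  have h2 : (α ^ (k - 1)) (α z) = z := by
    rw [← Equiv.Perm.mul_apply, ← pow_succ, Nat.sub_add_cancel (hk0 k hk), pow_k_apply k α hα]
  have h1 : z ∈ orb k α (α z) := by
    have h3 := mem_orb_of_pow k α hk hα (x := α z) (k - 1)
    rwa [h2] at h3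
  rw [← orb_eq_of_mem k α hk hα h]
  exact h1

include hk hα in
lemma orb_disjoint {x y : X} (hy : y ∉ orb k α x) : Disjoint (orb k α x) (orb k α y) := by
  rw [Finset.disjoint_left]
  intro z hzx hzy
  refine hy ?_
  rw [← orb_eq_of_mem k α hk hα hzx, orb_eq_of_mem k α hk hα hzy]
  exact mem_orb_self k α hk hα y

end Basic

section Invol
variable {X : Type*} [Fintype X] [DecidableEq X] (k : ℕ) (α : Equiv.Perm X)
variable (hk : Odd k) (hα : ∀ x : X, Function.minimalPeriod (⇑α) x = k)

lemma comm_pow {ι : Equiv.Perm X} (hc : ι * α = α * ι) (i : ℕ) (x : X) :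
    ι ((α ^ i) x) = (α ^ i) (ι x) := by
  have hc' : Commute ι α := hc
  have : Commute ι (α ^ i) := hc'.pow_right i
  calc ι ((α ^ i) x) = (ι * α ^ i) x := rfl
    _ = (α ^ i * ι) x := by rw [this]
    _ = (α ^ i) (ι x) := rfl

lemma invol_apply {ι : Equiv.Perm X} (h2 : ι * ι = 1) (x : X) : ι (ι x) = x := by
  have := congrArg (fun p : Equiv.Perm X => p x) h2
  simpa using this

include hk hα in
lemma apply_not_mem_orb {ι : Equiv.Perm X} (h2 : ι * ι = 1) (hf : ∀ x, ι x ≠ x)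
    (hc : ι * α = α * ι) (x : X) : ι x ∉ orb k α x := by
  intro hmem
  obtain ⟨i, hi, hix⟩ := (mem_orb k α).mp hmem
  -- x = ι (ι x) = ι (α^i x) = α^i (ι x) = α^i (α^i x) = α^(2i) x
  have h1 : (α ^ (2 * i)) x = (α ^ 0) x := by
    rw [pow_zero, Equiv.Perm.one_apply] -- goal: α^(2i) x = x
    rw [two_mul, pow_add, Equiv.Perm.mul_apply, hix, ← comm_pow α hc, hix, invol_apply h2]
  have h2i : (2 * i) % k = 0 % k := pow_apply_eq_iff k α hk hα (2 * i) 0 x |>.mp h1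
  have hdvd : k ∣ 2 * i := by
    simpa [Nat.dvd_iff_mod_eq_zero] using h2i
  have hki : k ∣ i := (Nat.Coprime.dvd_of_dvd_mul_left
    (Nat.coprime_comm.mp (hk.coprime_two_left)) hdvd)
  have hi0 : i = 0 := Nat.eq_zero_of_dvd_of_lt hki hi
  rw [hi0, pow_zero] at hix
  exact hf x (by simpa using hix :  x = ι x).symm

include hk hα in
lemma apply_mem_orb_iff {ι : Equiv.Perm X} (h2 : ι * ι = 1) (hc : ι * α = α * ι) (z w : X) :
    ι z ∈ orb k α w ↔ z ∈ orb k α (ι w) := by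
  rw [mem_orb, mem_orb]
  constructor
  · rintro ⟨i, hi, hiw⟩
    refine ⟨i, hi, ?_⟩
    have := congrArg (⇑ι) hiw
    rwa [comm_pow α hc, invol_apply h2] at this
  · rintro ⟨i, hi, hiw⟩
    refine ⟨i, hi, ?_⟩
    rw [← hiw, comm_pow α hc, invol_apply h2]

end Invol

section Idx
variable {X : Type*} [Fintype X] [DecidableEq X] (k : ℕ) (α : Equiv.Perm X)
variable (hk : Odd k) (hα : ∀ x : X, Function.minimalPeriod (⇑α) x = k)

/-- index of an orbit element -/
noncomputable def idx {x z : X} (hz : z ∈ orb k α x) : ℕ :=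
  Classical.choose ((mem_orb k α).mp hz)

lemma idx_spec {x z : X} (hz : z ∈ orb k α x) :
    idx k α hz < k ∧ (α ^ idx k α hz) x = z :=
  Classical.choose_spec ((mem_orb k α).mp hz)

include hk hα in
lemma idx_transfer {x z : X} (hz : z ∈ orb k α x) {i : ℕ} (hzi : (α ^ i) x = z) (y : X) :
    (α ^ idx k α hz) y = (α ^ i) y := by
  rw [pow_apply_eq_iff k α hk hα]
  exact (pow_apply_eq_iff k α hk hα _ _ x).mp ((idx_spec k α hz).2.trans hzi.symm)

variable (x0 y : X)

/-- the complement of two orbits -/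
def Pc (z : X) : Prop := z ∉ orb k α x0 ∧ z ∉ orb k α y

include hk hα in
lemma Pc_invariant : ∀ z, Pc k α x0 y (α z) ↔ Pc k α x0 y z := by
  intro z
  unfold Pc
  rw [mem_orb_iff_apply k α hk hα x0 z, mem_orb_iff_apply k α hk hα y z]

include hk hα in
lemma minimalPeriod_subtypePerm (hP : ∀ z, Pc k α x0 y (α z) ↔ Pc k α x0 y z)
    (z : {z // Pc k α x0 y z}) :
    Function.minimalPeriod (⇑(α.subtypePerm hP)) z = k := by
  set β := α.subtypePerm hP with hβ
  have hiter : ∀ n, Function.IsPeriodicPt (⇑β) n z ↔ Function.IsPeriodicPt (⇑α) n (z : X) := by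
    intro n
    unfold Function.IsPeriodicPt Function.IsFixedPt
    rw [Equiv.Perm.iterate_eq_pow, Equiv.Perm.iterate_eq_pow, hβ, Equiv.Perm.subtypePerm_pow]
    rw [Equiv.Perm.subtypePerm_apply]
    constructor
    · intro h; exact congrArg Subtype.val h
    · intro h; exact Subtype.ext h
  have hk' : Function.IsPeriodicPt (⇑β) k z := by
    rw [hiter]
    unfold Function.IsPeriodicPt Function.IsFixedPt
    rw [Equiv.Perm.iterate_eq_pow]
    exact pow_k_apply k α hα _
  have h1 : Function.minimalPeriod (⇑β) z ∣ k := hk'.minimalPeriod_dvd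
  have hpos : 0 < Function.minimalPeriod (⇑β) z :=
    hk'.minimalPeriod_pos (hk0 k hk)
  have h2 : k ∣ Function.minimalPeriod (⇑β) z := by
    have := Function.iterate_minimalPeriod (f := ⇑β) (x := z)
    have hper : Function.IsPeriodicPt (⇑α) (Function.minimalPeriod (⇑β) z) (z : X) :=
      (hiter _).mp this
    have := hper.minimalPeriod_dvd
    rwa [hα] at this
  exact Nat.dvd_antisymm h1 h2

end Idx

open scoped Classical Nat

section Main
variable {X : Type*} [Fintype X] [DecidableEq X] (k : ℕ) (α : Equiv.Perm X)
variable (hk : Odd k) (hα : ∀ x : X, Function.minimalPeriod (⇑α) x = k)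

include hα in
lemma apply_pow_succ (i : ℕ) (x : X) : α ((α ^ i) x) = (α ^ (i + 1)) x := by
  rw [pow_succ', Equiv.Perm.mul_apply]

variable (x0 y : X)

/-- the candidate involution built from a matching value `y` and an involution on the rest -/
noncomputable def gfun (ι' : Equiv.Perm {z // Pc k α x0 y z}) (z : X) : X :=
  if hz : z ∈ orb k α x0 then (α ^ idx k α hz) y
  else if hz2 : z ∈ orb k α y then (α ^ idx k α hz2) x0
  else (ι' ⟨z, hz, hz2⟩ : X)

include hk hα in
lemma gfun_orb_x0 (ι' : Equiv.Perm {z // Pc k α x0 y z}) (i : ℕ) :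
    gfun k α x0 y ι' ((α ^ i) x0) = (α ^ i) y := by
  unfold gfun
  rw [dif_pos (mem_orb_of_pow k α hk hα i)]
  exact idx_transfer k α hk hα _ rfl y

include hk hα in
lemma gfun_orb_y (hy : y ∉ orb k α x0) (ι' : Equiv.Perm {z // Pc k α x0 y z}) (i : ℕ) :
    gfun k α x0 y ι' ((α ^ i) y) = (α ^ i) x0 := by
  have h1 : (α ^ i) y ∈ orb k α y := mem_orb_of_pow k α hk hα i
  have h2 : (α ^ i) y ∉ orb k α x0 := fun h =>
    Finset.disjoint_left.mp (orb_disjoint k α hk hα hy) h h1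
  unfold gfun
  rw [dif_neg h2, dif_pos h1]
  exact idx_transfer k α hk hα _ rfl x0

lemma gfun_out (ι' : Equiv.Perm {z // Pc k α x0 y z}) {z : X}
    (h1 : z ∉ orb k α x0) (h2 : z ∉ orb k α y) :
    gfun k α x0 y ι' z = (ι' ⟨z, h1, h2⟩ : X) := by
  unfold gfun
  rw [dif_neg h1, dif_neg h2]

include hk hα in
lemma gfun_invol (hy : y ∉ orb k α x0) (ι' : Equiv.Perm {z // Pc k α x0 y z})
    (h2' : ι' * ι' = 1) : Function.Involutive (gfun k α x0 y ι') := by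
  intro z
  by_cases hz : z ∈ orb k α x0
  · obtain ⟨i, hi, rfl⟩ := (mem_orb k α).mp hz
    rw [gfun_orb_x0 k α hk hα, gfun_orb_y k α hk hα x0 y hy]
  · by_cases hz2 : z ∈ orb k α y
    · obtain ⟨i, hi, rfl⟩ := (mem_orb k α).mp hz2
      rw [gfun_orb_y k α hk hα x0 y hy, gfun_orb_x0 k α hk hα]
    · rw [gfun_out k α x0 y ι' hz hz2]
      have hw := (ι' ⟨z, hz, hz2⟩).2
      rw [gfun_out k α x0 y ι' hw.1 hw.2]
      have hcoe : (⟨((ι' ⟨z, hz, hz2⟩ : {z // Pc k α x0 y z}) : X), hw.1, hw.2⟩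
          : {z // Pc k α x0 y z}) = ι' ⟨z, hz, hz2⟩ := rfl
      rw [hcoe, invol_apply h2']

include hk hα in
lemma stepC (hy : y ∉ orb k α x0) :
    ((Finset.univ.filter fun ι : Equiv.Perm X =>
        ι * ι = 1 ∧ (∀ x, ι x ≠ x) ∧ ι * α = α * ι).filter fun ι => ι x0 = y).card
      = (Finset.univ.filter fun ι' : Equiv.Perm {z // Pc k α x0 y z} =>
        ι' * ι' = 1 ∧ (∀ x, ι' x ≠ x) ∧
          ι' * (α.subtypePerm (Pc_invariant k α hk hα x0 y))
            = (α.subtypePerm (Pc_invariant k α hk hα x0 y)) * ι').card := by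
  have hdisj := orb_disjoint k α hk hα hy
  set α' := α.subtypePerm (Pc_invariant k α hk hα x0 y) with hα'def
  have hpres : ∀ (ι : Equiv.Perm X), ι * ι = 1 → (ι * α = α * ι) → ι x0 = y →
      ∀ z, Pc k α x0 y (ι z) ↔ Pc k α x0 y z := by
    intro ι h2 hc hx0y z
    have hιy : ι y = x0 := by rw [← hx0y, invol_apply h2]
    have e1 : ι z ∈ orb k α x0 ↔ z ∈ orb k α y := by
      rw [apply_mem_orb_iff k α hk hα h2 hc, hx0y]
    have e2 : ι z ∈ orb k α y ↔ z ∈ orb k α x0 := by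
      rw [apply_mem_orb_iff k α hk hα h2 hc, hιy]
    unfold Pc
    rw [e1, e2]
    tauto
  refine Finset.card_bij'
    (fun ι hι => ι.subtypePerm (hpres ι (Finset.mem_filter.mp (Finset.mem_filter.mp hι).1).2.1
        (Finset.mem_filter.mp (Finset.mem_filter.mp hι).1).2.2.2
        (Finset.mem_filter.mp hι).2))
    (fun ι' hι' => Function.Involutive.toPerm _
        (gfun_invol k α hk hα x0 y hy ι' (Finset.mem_filter.mp hι').2.1))
    ?_ ?_ ?_ ?_
  -- 1) forward lands in target
  · intro ι hι
    obtain ⟨h2, hf, hc⟩ := (Finset.mem_filter.mp (Finset.mem_filter.mp hι).1).2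
    have hx0y : ι x0 = y := (Finset.mem_filter.mp hι).2
    rw [Finset.mem_filter]
    refine ⟨Finset.mem_univ _, ?_, ?_, ?_⟩
    · ext z
      simp only [Equiv.Perm.mul_apply, Equiv.Perm.subtypePerm_apply, Equiv.Perm.one_apply]
      simpa using invol_apply h2 (z : X)
    · intro z hz
      exact hf (z : X) (congrArg Subtype.val hz)
    · ext z
      simp only [hα'def, Equiv.Perm.mul_apply, Equiv.Perm.subtypePerm_apply]
      have := congrArg (fun p : Equiv.Perm X => p (z : X)) hc
      simpa using this
  -- 2) backward lands in source
  · intro ι' hι'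
    obtain ⟨h2', hf', hc'⟩ := (Finset.mem_filter.mp hι').2
    rw [Finset.mem_filter, Finset.mem_filter]
    have hgy : ∀ z, Function.Involutive.toPerm _ (gfun_invol k α hk hα x0 y hy ι'
        (Finset.mem_filter.mp hι').2.1) z = gfun k α x0 y ι' z := fun z => rfl
    refine ⟨⟨Finset.mem_univ _, ?_, ?_, ?_⟩, ?_⟩
    · ext z
      simp only [Equiv.Perm.mul_apply, Equiv.Perm.one_apply, hgy]
      exact gfun_invol k α hk hα x0 y hy ι' h2' z
    · intro z hz
      rw [hgy] at hz
      by_cases h1 : z ∈ orb k α x0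
      · obtain ⟨i, hi, rfl⟩ := (mem_orb k α).mp h1
        rw [gfun_orb_x0 k α hk hα] at hz
        have : (α ^ i) y ∈ orb k α y := mem_orb_of_pow k α hk hα i
        rw [hz] at this
        exact Finset.disjoint_left.mp hdisj h1 this
      · by_cases h2 : z ∈ orb k α y
        · obtain ⟨i, hi, rfl⟩ := (mem_orb k α).mp h2
          rw [gfun_orb_y k α hk hα x0 y hy] at hz
          have : (α ^ i) x0 ∈ orb k α x0 := mem_orb_of_pow k α hk hα i
          rw [hz] at this
          exact Finset.disjoint_left.mp hdisj this h2
        · rw [gfun_out k α x0 y ι' h1 h2] at hz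
          exact hf' ⟨z, h1, h2⟩ (Subtype.ext hz)
    · ext z
      simp only [Equiv.Perm.mul_apply, hgy]
      -- goal : g (α z) = α (g z)
      by_cases h1 : z ∈ orb k α x0
      · obtain ⟨i, hi, rfl⟩ := (mem_orb k α).mp h1
        rw [apply_pow_succ k α hα, gfun_orb_x0 k α hk hα, gfun_orb_x0 k α hk hα,
          apply_pow_succ k α hα]
      · by_cases h2 : z ∈ orb k α y
        · obtain ⟨i, hi, rfl⟩ := (mem_orb k α).mp h2
          rw [apply_pow_succ k α hα, gfun_orb_y k α hk hα x0 y hy,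
            gfun_orb_y k α hk hα x0 y hy, apply_pow_succ k α hα]
        · have h1' : α z ∉ orb k α x0 := fun h =>
            h1 ((mem_orb_iff_apply k α hk hα x0 z).mpr h)
          have h2' : α z ∉ orb k α y := fun h =>
            h2 ((mem_orb_iff_apply k α hk hα y z).mpr h)
          rw [gfun_out k α x0 y ι' h1' h2', gfun_out k α x0 y ι' h1 h2]
          have := congrArg (fun p : Equiv.Perm _ => ((p ⟨z, h1, h2⟩ : {z // Pc k α x0 y z}) : X)) hc'
          simp only [Equiv.Perm.mul_apply] at this
          have hsub : α' ⟨z, h1, h2⟩ = ⟨α z, h1', h2'⟩ := by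
            rw [hα'def]; rfl
          rw [hsub] at this
          rw [this, hα'def]
          simp [Equiv.Perm.subtypePerm_apply]
    · -- value at x0
      have h0 : gfun k α x0 y ι' ((α ^ 0) x0) = (α ^ 0) y := gfun_orb_x0 k α hk hα x0 y ι' 0
      rw [hgy]
      simpa using h0
  -- 3) left inverse
  · intro ι hι
    obtain ⟨h2, hf, hc⟩ := (Finset.mem_filter.mp (Finset.mem_filter.mp hι).1).2
    have hx0y : ι x0 = y := (Finset.mem_filter.mp hι).2
    have hιy : ι y = x0 := by rw [← hx0y, invol_apply h2]
    ext z
    show gfun k α x0 y _ z = ι z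
    by_cases h1 : z ∈ orb k α x0
    · obtain ⟨i, hi, rfl⟩ := (mem_orb k α).mp h1
      rw [gfun_orb_x0 k α hk hα, comm_pow α hc, hx0y]
    · by_cases h2m : z ∈ orb k α y
      · obtain ⟨i, hi, rfl⟩ := (mem_orb k α).mp h2m
        rw [gfun_orb_y k α hk hα x0 y hy, comm_pow α hc, hιy]
      · rw [gfun_out k α x0 y _ h1 h2m]
        rfl
  -- 4) right inverse
  · intro ι' hι'
    obtain ⟨h2', hf', hc'⟩ := (Finset.mem_filter.mp hι').2
    ext z
    show gfun k α x0 y ι' (z : X) = ((ι' z : {z // Pc k α x0 y z}) : X)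
    rw [gfun_out k α x0 y ι' z.2.1 z.2.2]

/-- target count -/
def fCount (k m : ℕ) : ℕ := if Even m then k ^ (m / 2) * (m - 1)‼ else 0

lemma fCount_rec (k m : ℕ) (hm : 1 ≤ m) :
    k * (m - 1) * fCount k (m - 2) = fCount k m := by
  unfold fCount
  rcases Nat.even_or_odd m with he | ho
  · obtain ⟨t, rfl⟩ := he
    have ht : 1 ≤ t := by omega
    rw [if_pos ⟨t - 1, by omega⟩, if_pos ⟨t, rfl⟩]
    have h1 : (t + t - 2) / 2 = t - 1 := by omega
    have h2 : (t + t) / 2 = t := by omega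
    rw [h1, h2]
    rcases Nat.lt_or_ge t 2 with h | h
    · have : t = 1 := by omega
      subst this
      simp [Nat.doubleFactorial]
    · have e1 : t + t - 1 = (t + t - 3) + 2 := by omega
      have e2 : t + t - 2 - 1 = t + t - 3 := by omega
      rw [e1, Nat.doubleFactorial_add_two, e2]
      have e4 : k ^ t = k ^ (t - 1) * k := by
        rw [← pow_succ]
        congr 1
        omega
      rw [e4]
      ring
  · rw [if_neg (show ¬ Even m by simpa using ho)]
    rcases Nat.lt_or_ge m 2 with h | h
    · have : m = 1 := by omega
      subst this
      simp
    · rw [if_neg (by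
        rintro ⟨t, ht⟩
        rcases ho with ⟨s, hs⟩
        omega)]
      simp

theorem auxMain (k : ℕ) (hk : Odd k) :
    ∀ m : ℕ, ∀ (X : Type u) (_ : Fintype X) (_ : DecidableEq X) (α : Equiv.Perm X),
      Fintype.card X = k * m → (∀ x : X, Function.minimalPeriod (⇑α) x = k) →
      (Finset.univ.filter fun ι : Equiv.Perm X =>
          ι * ι = 1 ∧ (∀ x, ι x ≠ x) ∧ ι * α = α * ι).card = fCount k m := by
  intro m
  induction m using Nat.strong_induction_on with
  | _ m IH =>
  intro X _ _ α hcard hα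
  rcases Nat.eq_zero_or_pos m with rfl | hm
  · have hempty : IsEmpty X := Fintype.card_eq_zero_iff.mp (by simpa using hcard)
    have hall : ∀ ι : Equiv.Perm X, ι * ι = 1 ∧ (∀ x, ι x ≠ x) ∧ ι * α = α * ι := fun ι =>
      ⟨Equiv.ext fun x => hempty.elim x, fun x => hempty.elim x,
        Equiv.ext fun x => hempty.elim x⟩
    rw [Finset.filter_true_of_mem (fun ι _ => hall ι), Finset.card_univ, Fintype.card_perm,
      hcard]
    simp [fCount]
  · have hk1 := hk0 k hk
    have hpos : 0 < Fintype.card X := by rw [hcard]; exact Nat.mul_pos hk1 hm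
    obtain ⟨x0⟩ := Fintype.card_pos_iff.mp hpos
    have hYcard : (Finset.univ \ orb k α x0).card = k * (m - 1) := by
      rw [Finset.card_sdiff_of_subset (Finset.subset_univ _), Finset.card_univ, hcard,
        card_orb k α hk hα]
      obtain ⟨m', rfl⟩ : ∃ m', m = m' + 1 := ⟨m - 1, by omega⟩
      simp [Nat.mul_succ]
    have hfiber : ∀ ι ∈ (Finset.univ.filter fun ι : Equiv.Perm X =>
        ι * ι = 1 ∧ (∀ x, ι x ≠ x) ∧ ι * α = α * ι), ι x0 ∈ Finset.univ \ orb k α x0 := by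
      intro ι hι
      obtain ⟨h2, hf, hc⟩ := (Finset.mem_filter.mp hι).2
      exact Finset.mem_sdiff.mpr ⟨Finset.mem_univ _, apply_not_mem_orb k α hk hα h2 hf hc x0⟩
    rw [Finset.card_eq_sum_card_fiberwise hfiber]
    have hstep : ∀ y ∈ Finset.univ \ orb k α x0,
        ((Finset.univ.filter fun ι : Equiv.Perm X =>
          ι * ι = 1 ∧ (∀ x, ι x ≠ x) ∧ ι * α = α * ι).filter fun ι => ι x0 = y).card
          = fCount k (m - 2) := by
      intro y hy
      have hy' : y ∉ orb k α x0 := (Finset.mem_sdiff.mp hy).2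
      rw [stepC k α hk hα x0 y hy']
      have hm2 : 2 ≤ m := by
        have hle : (orb k α x0 ∪ orb k α y).card ≤ Fintype.card X := by
          rw [← Finset.card_univ]
          exact Finset.card_le_card (Finset.subset_univ _)
        rw [Finset.card_union_of_disjoint (orb_disjoint k α hk hα hy'),
          card_orb k α hk hα, card_orb k α hk hα, hcard] at hle
        by_contra h
        have hm1 : m = 1 := by omega
        rw [hm1, Nat.mul_one] at hle
        omega
      have hcard' : Fintype.card {z // Pc k α x0 y z} = k * (m - 2) := by
        rw [Fintype.card_subtype]
        have heq : Finset.filter (Pc k α x0 y) Finset.univ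
            = Finset.univ \ (orb k α x0 ∪ orb k α y) := by
          ext z
          simp only [Pc, Finset.mem_filter, Finset.mem_univ, true_and, Finset.mem_sdiff,
            Finset.mem_union]
          tauto
        rw [heq, Finset.card_sdiff_of_subset (Finset.subset_univ _), Finset.card_univ, hcard,
          Finset.card_union_of_disjoint (orb_disjoint k α hk hα hy'),
          card_orb k α hk hα, card_orb k α hk hα]
        obtain ⟨m', rfl⟩ : ∃ m', m = m' + 2 := ⟨m - 2, by omega⟩
        simp only [Nat.add_sub_cancel, Nat.mul_add]
        omega
      exact IH (m - 2) (by omega) _ _ _ (α.subtypePerm (Pc_invariant k α hk hα x0 y)) hcard'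
        (minimalPeriod_subtypePerm k α hk hα x0 y _)
    rw [Finset.sum_congr rfl hstep, Finset.sum_const, hYcard, smul_eq_mul,
      ← fCount_rec k m hm]

end Main

open scoped Classical Nat in
/-- For odd `k`, the number of fixed-point free involutions commuting with a permutation
consisting of `m` disjoint `k`-cycles (every point has minimal period `k`, on a set of
size `k·m`) is `k^s (2s-1)!!` when `m = 2s`, and `0` when `m` is odd. -/
theorem comm_matchings_odd_cycles {X : Type*} [Fintype X] [DecidableEq X]
    (k m : ℕ) (hk : Odd k) (α : Equiv.Perm X) (hcard : Fintype.card X = k * m)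
    (hα : ∀ x : X, Function.minimalPeriod (⇑α) x = k) :
    (∀ s : ℕ, m = 2 * s →
      (Finset.univ.filter fun ι : Equiv.Perm X =>
          ι * ι = 1 ∧ (∀ x, ι x ≠ x) ∧ ι * α = α * ι).card = k ^ s * (2 * s - 1)‼) ∧
    (Odd m →
      (Finset.univ.filter fun ι : Equiv.Perm X =>
          ι * ι = 1 ∧ (∀ x, ι x ≠ x) ∧ ι * α = α * ι).card = 0) := by
  have H := auxMain k hk m X inferInstance inferInstance α hcard hα
  constructor
  · intro s hs
    subst hs
    rw [H]
    unfold fCount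
    rw [if_pos (even_two_mul s), Nat.mul_div_cancel_left s (by norm_num)]
  · intro hodd
    rw [H]
    unfold fCount
    rw [if_neg (by simpa using hodd)]
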